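/- Every independent set U of vertices of G(n,3,1) can be written as a union U = (∪_{i∈I} A_i) ∪ (∪_{j∈J} B_j) ∪ (∪_{k∈K} C_k), where each A_i is a set of vertices of the first type, each B_j is a set of vertices of the second type, each C_k is a set of vertices of the third type, and the supports of all the sets A_i, B_j, C_k are pairwise disjoint. -/

import Mathlib

/-- The vertices of `G(n,3,1)`: 3-element subsets of `{1, …, n}`. -/
abbrev Vtx (n : ℕ) := {s : Finset ℕ // s ⊆ Finset.Icc 1 n ∧ s.card = 3}

/-- The graph `G(n,3,1)`: two 3-element subsets of `{1, …, n}` are adjacent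
iff they intersect in exactly one element. -/
def G (n : ℕ) : SimpleGraph (Vtx n) where
  Adj a b := (a.1 ∩ b.1).card = 1
  symm := ⟨fun a b (h : (a.1 ∩ b.1).card = 1) => show (b.1 ∩ a.1).card = 1 by
    rwa [Finset.inter_comm]⟩
  loopless := ⟨fun a (h : (a.1 ∩ a.1).card = 1) => by
    rw [Finset.inter_self, a.2.2] at h; omega⟩

instance (n : ℕ) : DecidableRel (G n).Adj := fun a b =>
  inferInstanceAs (Decidable ((a.1 ∩ b.1).card = 1))

instance (n : ℕ) : Fintype (Vtx n) :=
  Fintype.subtype ((Finset.Icc 1 n).powerset.filter fun s => s.card = 3) (by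
    intro s
    simp [Finset.mem_powerset, and_comm])

instance (n : ℕ) (s : Set (Vtx n)) : DecidableRel ((G n).induce s).Adj := fun a b =>
  inferInstanceAs (Decidable (((a : Vtx n).1 ∩ (b : Vtx n).1).card = 1))

/-- The number of edges of `G(n,3,1)` with both endpoints in `W`. -/
def edgesIn (n : ℕ) (W : Finset (Vtx n)) : ℕ :=
  ((G n).induce (W : Set (Vtx n))).edgeFinset.card

/-- The independence number of `G(n,3,1)`. -/
noncomputable def alpha (n : ℕ) : ℕ :=
  sSup {k | ∃ W : Finset (Vtx n), W.card = k ∧ ∀ u ∈ W, ∀ v ∈ W, ¬ (G n).Adj u v}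

/-- The minimal number of edges induced on a vertex subset of cardinality `l`. -/
noncomputable def rmin (n l : ℕ) : ℕ :=
  sInf {m | ∃ W : Finset (Vtx n), W.card = l ∧ edgesIn n W = m}

/-- The support of a set of vertices: the union of the corresponding
3-element subsets of `{1, …, n}`. -/
def support (n : ℕ) (W : Set (Vtx n)) : Set ℕ := ⋃ w ∈ W, (w.1 : Set ℕ)

/-- `W` is a set of vertices of the first type: `|W| ≥ 3` and there are
`i, j ∈ {1, …, n}` belonging to every vertex of `W`. -/
def FirstType (n : ℕ) (W : Set (Vtx n)) : Prop :=
  3 ≤ W.ncard ∧ ∃ i ∈ Finset.Icc 1 n, ∃ j ∈ Finset.Icc 1 n,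
    ∀ w ∈ W, i ∈ w.1 ∧ j ∈ w.1

/-- `W` is a set of vertices of the second type: `|W| ≥ 2` and there are
`i, j, k, t ∈ {1, …, n}` such that every vertex of `W` is contained in `{i, j, k, t}`. -/
def SecondType (n : ℕ) (W : Set (Vtx n)) : Prop :=
  2 ≤ W.ncard ∧ ∃ i ∈ Finset.Icc 1 n, ∃ j ∈ Finset.Icc 1 n, ∃ k ∈ Finset.Icc 1 n,
    ∃ t ∈ Finset.Icc 1 n, ∀ w ∈ W, w.1 ⊆ ({i, j, k, t} : Finset ℕ)

/-- `W` is a set of vertices of the third type: any two distinct vertices of `W`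
are disjoint as subsets of `{1, …, n}`. -/
def ThirdType (n : ℕ) (W : Set (Vtx n)) : Prop :=
  ∀ w₁ ∈ W, ∀ w₂ ∈ W, w₁ ≠ w₂ → Disjoint w₁.1 w₂.1

lemma aux_card4 {S : Finset ℕ} (h : S.card = 4) : ∃ i j k t : ℕ, S = {i, j, k, t} := by
  rw [show (4:ℕ) = 3 + 1 from rfl, Finset.card_eq_succ] at h
  obtain ⟨i, T, hiT, hins, hT⟩ := h
  obtain ⟨j, k, t, _, _, _, rfl⟩ := Finset.card_eq_three.mp hT
  exact ⟨i, j, k, t, hins.symm⟩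

lemma lemL {a b c : Finset ℕ} (ha : a.card = 3) (hb : b.card = 3) (hc : c.card = 3)
    (hab : (a ∩ b).card = 2) (hac : (a ∩ c).card = 2) (hbc : (b ∩ c).card = 2)
    (hne : a ∩ b ≠ a ∩ c) : b \ a = c \ a := by
  have h1 : ((a ∩ b) ∩ (a ∩ c)).card ≤ 1 := by
    by_contra h
    push_neg at h
    have e1 : (a ∩ b) ∩ (a ∩ c) = a ∩ b :=
      Finset.eq_of_subset_of_card_le Finset.inter_subset_left (by omega)
    have e2 : (a ∩ b) ∩ (a ∩ c) = a ∩ c :=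
      Finset.eq_of_subset_of_card_le Finset.inter_subset_right (by omega)
    exact hne (by rw [← e1, e2])
  have hsub : ((a ∩ b) ∪ (a ∩ c)) ⊆ a :=
    Finset.union_subset Finset.inter_subset_left Finset.inter_subset_left
  have h2 : ((b ∩ c) ∩ a) ⊆ (a ∩ b) ∩ (a ∩ c) := by
    intro x hx
    simp only [Finset.mem_inter] at hx ⊢
    tauto
  have h3 : ((b ∩ c) \ a).card + ((b ∩ c) ∩ a).card = (b ∩ c).card :=
    Finset.card_sdiff_add_card_inter _ _
  have h4 : ((b ∩ c) ∩ a).card ≤ 1 := le_trans (Finset.card_le_card h2) h1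
  have h5 : ((b ∩ c) \ a).Nonempty := by rw [← Finset.card_pos]; omega
  obtain ⟨x, hx⟩ := h5
  rw [Finset.mem_sdiff, Finset.mem_inter] at hx
  have hxb : x ∈ b \ a := Finset.mem_sdiff.mpr ⟨hx.1.1, hx.2⟩
  have hxc : x ∈ c \ a := Finset.mem_sdiff.mpr ⟨hx.1.2, hx.2⟩
  have hba : (b \ a).card = 1 := by
    have h6 := Finset.card_sdiff_add_card_inter b a
    rw [Finset.inter_comm] at h6
    omega
  have hca : (c \ a).card = 1 := by
    have h6 := Finset.card_sdiff_add_card_inter c a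
    rw [Finset.inter_comm] at h6
    omega
  obtain ⟨y, hy⟩ := Finset.card_eq_one.mp hba
  obtain ⟨z, hz⟩ := Finset.card_eq_one.mp hca
  rw [hy] at hxb
  rw [hz] at hxc
  rw [Finset.mem_singleton] at hxb hxc
  rw [hy, hz, ← hxb, ← hxc]

lemma classStruct (n : ℕ) (W : Set (Vtx n))
    (hW : ∀ u ∈ W, ∀ v ∈ W, u ≠ v → ((u : Vtx n).1 ∩ (v : Vtx n).1).card = 2) :
    FirstType n W ∨ SecondType n W ∨ ThirdType n W := by
  classical
  by_cases hpair : ∃ u ∈ W, ∃ v ∈ W, u ≠ v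
  swap
  · right; right
    intro w₁ h₁ w₂ h₂ hne
    exact absurd ⟨w₁, h₁, w₂, h₂, hne⟩ hpair
  obtain ⟨u, hu, v, hv, huv⟩ := hpair
  have hn2 : 2 ≤ W.ncard := by
    have h1 : ({u, v} : Set (Vtx n)).ncard = 2 := Set.ncard_pair huv
    have h2 : ({u, v} : Set (Vtx n)) ⊆ W := by
      intro x hx
      simp only [Set.mem_insert_iff, Set.mem_singleton_iff] at hx
      rcases hx with rfl | rfl
      exacts [hu, hv]
    calc 2 = ({u, v} : Set (Vtx n)).ncard := h1.symm
    _ ≤ W.ncard := Set.ncard_le_ncard h2 (Set.toFinite W)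
  by_cases hyes : ∃ a ∈ W, ∃ b ∈ W, ∃ c ∈ W, b ≠ a ∧ c ≠ a ∧
      (a : Vtx n).1 ∩ (b : Vtx n).1 ≠ (a : Vtx n).1 ∩ (c : Vtx n).1
  · -- Second type: all vertices inside a 4-element set
    right; left
    obtain ⟨a, ha, b, hb, c, hc, hba, hca, habc⟩ := hyes
    have hbc : b ≠ c := by rintro rfl; exact habc rfl
    have hab2 : (a.1 ∩ b.1).card = 2 := hW a ha b hb (Ne.symm hba)
    have hac2 : (a.1 ∩ c.1).card = 2 := hW a ha c hc (Ne.symm hca)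
    have hbc2 : (b.1 ∩ c.1).card = 2 := hW b hb c hc hbc
    have key : ∀ w ∈ W, (w : Vtx n).1 ⊆ a.1 ∪ b.1 := by
      intro w hw
      by_cases hwa : w = a
      · subst hwa; exact Finset.subset_union_left
      have haw2 : (a.1 ∩ w.1).card = 2 := hW a ha w hw (Ne.symm hwa)
      have hkey : w.1 \ a.1 = b.1 \ a.1 := by
        by_cases hwb : a.1 ∩ w.1 = a.1 ∩ b.1
        · have hwc : w ≠ c := by rintro rfl; exact habc hwb.symm
          have hwc2 : (w.1 ∩ c.1).card = 2 := hW w hw c hc hwc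
          have h1 : w.1 \ a.1 = c.1 \ a.1 :=
            lemL a.2.2 w.2.2 c.2.2 haw2 hac2 hwc2 (by rw [hwb]; exact habc)
          have h2 : b.1 \ a.1 = c.1 \ a.1 :=
            lemL a.2.2 b.2.2 c.2.2 hab2 hac2 hbc2 habc
          rw [h1, h2]
        · have hwb' : w ≠ b := by rintro rfl; exact hwb rfl
          have hwb2 : (w.1 ∩ b.1).card = 2 := hW w hw b hb hwb'
          exact lemL a.2.2 w.2.2 b.2.2 haw2 hab2 hwb2 hwb
      intro x hx
      by_cases hxa : x ∈ a.1
      · exact Finset.mem_union_left _ hxa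
      · have hx' : x ∈ w.1 \ a.1 := Finset.mem_sdiff.mpr ⟨hx, hxa⟩
        rw [hkey] at hx'
        exact Finset.mem_union_right _ (Finset.mem_sdiff.mp hx').1
    have hScard : (a.1 ∪ b.1).card = 4 := by
      have h6 := Finset.card_union_add_card_inter a.1 b.1
      rw [hab2, a.2.2, b.2.2] at h6
      omega
    obtain ⟨i, j, k, t, hS⟩ := aux_card4 hScard
    have hSsub : a.1 ∪ b.1 ⊆ Finset.Icc 1 n := Finset.union_subset a.2.1 b.2.1
    refine ⟨hn2, i, hSsub (by rw [hS]; simp), j, hSsub (by rw [hS]; simp),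
      k, hSsub (by rw [hS]; simp), t, hSsub (by rw [hS]; simp), ?_⟩
    intro w hw
    rw [← hS]
    exact key w hw
  · -- common pair case
    push_neg at hyes
    have hP2 : (u.1 ∩ v.1).card = 2 := hW u hu v hv huv
    have hPsub : ∀ w ∈ W, u.1 ∩ v.1 ⊆ (w : Vtx n).1 := by
      intro w hw
      by_cases hwu : w = u
      · subst hwu; exact Finset.inter_subset_left
      by_cases hwv : w = v
      · subst hwv; exact Finset.inter_subset_right
      · have h6 := hyes u hu w hw v hv hwu (Ne.symm huv)
        rw [← h6]
        exact Finset.inter_subset_right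
    by_cases h3 : 3 ≤ W.ncard
    · left
      obtain ⟨i, j, hij, hP⟩ := Finset.card_eq_two.mp hP2
      have hiP : i ∈ u.1 ∩ v.1 := by rw [hP]; simp
      have hjP : j ∈ u.1 ∩ v.1 := by rw [hP]; simp
      refine ⟨h3, i, u.2.1 (Finset.mem_of_mem_inter_left hiP),
        j, u.2.1 (Finset.mem_of_mem_inter_left hjP), ?_⟩
      intro w hw
      exact ⟨hPsub w hw hiP, hPsub w hw hjP⟩
    · right; left
      push_neg at h3
      have hWuv : W = {u, v} := by
        refine (Set.eq_of_subset_of_ncard_le ?_ ?_ (Set.toFinite W)).symm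
        · intro x hx
          simp only [Set.mem_insert_iff, Set.mem_singleton_iff] at hx
          rcases hx with rfl | rfl
          exacts [hu, hv]
        · rw [Set.ncard_pair huv]; omega
      have hScard : (u.1 ∪ v.1).card = 4 := by
        have h6 := Finset.card_union_add_card_inter u.1 v.1
        rw [hP2, u.2.2, v.2.2] at h6
        omega
      obtain ⟨i, j, k, t, hS⟩ := aux_card4 hScard
      have hSsub : u.1 ∪ v.1 ⊆ Finset.Icc 1 n := Finset.union_subset u.2.1 v.2.1
      refine ⟨hn2, i, hSsub (by rw [hS]; simp), j, hSsub (by rw [hS]; simp),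
        k, hSsub (by rw [hS]; simp), t, hSsub (by rw [hS]; simp), ?_⟩
      intro w hw
      rw [← hS, hWuv] at *
      simp only [Set.mem_insert_iff, Set.mem_singleton_iff] at hw
      rcases hw with rfl | rfl
      exacts [Finset.subset_union_left, Finset.subset_union_right]

/-- Every independent set `U` of vertices of `G(n,3,1)` can be written as a union of
sets of vertices of the first, second and third types whose supports are pairwise
disjoint. -/
theorem stmt_2 (n : ℕ) (U : Set (Vtx n))
    (hU : ∀ u ∈ U, ∀ v ∈ U, ¬ (G n).Adj u v) :
    ∃ 𝒜 ℬ 𝒞 : Set (Set (Vtx n)),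
      (∀ A ∈ 𝒜, FirstType n A) ∧
      (∀ B ∈ ℬ, SecondType n B) ∧
      (∀ C ∈ 𝒞, ThirdType n C) ∧
      U = (⋃ A ∈ 𝒜, A) ∪ (⋃ B ∈ ℬ, B) ∪ (⋃ C ∈ 𝒞, C) ∧
      (𝒜 ∪ ℬ ∪ 𝒞).Pairwise (fun W₁ W₂ => Disjoint (support n W₁) (support n W₂)) := by
  classical
  have hcard : ∀ u ∈ U, ∀ v ∈ U, u ≠ v →
      ((u : Vtx n).1 ∩ (v : Vtx n).1).card = 0 ∨ (u.1 ∩ v.1).card = 2 := by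
    intro u hu v hv huv
    have h1 : (u.1 ∩ v.1).card ≠ 1 := hU u hu v hv
    have h3 : (u.1 ∩ v.1).card ≤ 3 := by
      calc (u.1 ∩ v.1).card ≤ u.1.card := Finset.card_le_card Finset.inter_subset_left
      _ = 3 := u.2.2
    have hne3 : (u.1 ∩ v.1).card ≠ 3 := by
      intro h
      have he : u.1 ∩ v.1 = u.1 :=
        Finset.eq_of_subset_of_card_le Finset.inter_subset_left (by rw [u.2.2, h])
      have husub : u.1 ⊆ v.1 := by rw [← he]; exact Finset.inter_subset_right
      have heq : u.1 = v.1 :=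
        Finset.eq_of_subset_of_card_le husub (by rw [u.2.2, v.2.2])
      exact huv (Subtype.ext heq)
    omega
  set R : Vtx n → Vtx n → Prop :=
    fun u v => u = v ∨ (u.1 ∩ v.1).card = 2 with hRdef
  have hRsymm : ∀ u v, R u v → R v u := by
    intro u v h
    rcases h with h | h
    · exact Or.inl h.symm
    · exact Or.inr (by rwa [Finset.inter_comm])
  have hRdisj : ∀ u ∈ U, ∀ v ∈ U, ¬ R u v → Disjoint u.1 v.1 := by
    intro u hu v hv h
    have huv : u ≠ v := fun he => h (Or.inl he)
    rcases hcard u hu v hv huv with h0 | h2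
    · rw [Finset.disjoint_iff_inter_eq_empty]
      exact Finset.card_eq_zero.mp h0
    · exact absurd (Or.inr h2) h
  have hRtrans : ∀ u ∈ U, ∀ v ∈ U, ∀ w ∈ U, R u v → R v w → R u w := by
    intro u hu v hv w hw h1 h2
    rcases h1 with rfl | h1
    · exact h2
    rcases h2 with rfl | h2
    · exact Or.inr h1
    by_contra hcon
    have hd := hRdisj u hu w hw hcon
    have hdisj2 : Disjoint (u.1 ∩ v.1) (w.1 ∩ v.1) :=
      hd.mono Finset.inter_subset_left Finset.inter_subset_left
    have hcardu : ((u.1 ∩ v.1) ∪ (w.1 ∩ v.1)).card = 4 := by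
      rw [Finset.card_union_of_disjoint hdisj2, h1, Finset.inter_comm, h2]
    have hsubv : ((u.1 ∩ v.1) ∪ (w.1 ∩ v.1)) ⊆ v.1 :=
      Finset.union_subset Finset.inter_subset_right Finset.inter_subset_right
    have := Finset.card_le_card hsubv
    rw [hcardu, v.2.2] at this
    omega
  set cls : Vtx n → Set (Vtx n) := fun u => {v | v ∈ U ∧ R v u} with hclsdef
  have hclsmem : ∀ u ∈ U, u ∈ cls u := fun u hu => ⟨hu, Or.inl rfl⟩
  have hclssub : ∀ u, cls u ⊆ U := fun u v hv => hv.1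
  have hclseq : ∀ u ∈ U, ∀ u' ∈ U, R u u' → cls u = cls u' := by
    intro u hu u' hu' h
    ext v
    constructor
    · rintro ⟨hv, hvu⟩
      exact ⟨hv, hRtrans v hv u hu u' hu' hvu h⟩
    · rintro ⟨hv, hvu'⟩
      exact ⟨hv, hRtrans v hv u' hu' u hu hvu' (hRsymm _ _ h)⟩
  have hclspair : ∀ u ∈ U, ∀ v ∈ cls u, ∀ w ∈ cls u, v ≠ w →
      ((v : Vtx n).1 ∩ (w : Vtx n).1).card = 2 := by
    intro u hu v hv w hw hvw
    have h : R v w := hRtrans v hv.1 u hu w hw.1 hv.2 (hRsymm _ _ hw.2)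
    rcases h with h | h
    · exact absurd h hvw
    · exact h
  have hclsdisj : ∀ u ∈ U, ∀ u' ∈ U, ¬ R u u' →
      ∀ v ∈ cls u, ∀ w ∈ cls u', Disjoint v.1 w.1 := by
    intro u hu u' hu' h v hv w hw
    apply hRdisj v hv.1 w hw.1
    intro hvw
    exact h (hRtrans u hu v hv.1 u' hu' (hRsymm _ _ hv.2)
      (hRtrans v hv.1 w hw.1 u' hu' hvw hw.2))
  set 𝒮 : Set (Set (Vtx n)) := {W | ∃ u ∈ U, W = cls u} with hSdef
  refine ⟨{W | W ∈ 𝒮 ∧ FirstType n W},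
    {W | W ∈ 𝒮 ∧ ¬ FirstType n W ∧ SecondType n W},
    {W | W ∈ 𝒮 ∧ ¬ FirstType n W ∧ ¬ SecondType n W}, ?_, ?_, ?_, ?_, ?_⟩
  · exact fun A hA => hA.2
  · exact fun B hB => hB.2.2
  · rintro C ⟨⟨u, hu, rfl⟩, hn1, hn2⟩
    rcases classStruct n _ (hclspair u hu) with h | h | h
    · exact absurd h hn1
    · exact absurd h hn2
    · exact h
  · ext u
    simp only [Set.mem_union, Set.mem_iUnion, Set.mem_setOf_eq, exists_prop]
    constructor
    · intro hu
      have hmem := hclsmem u hu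
      have hS : cls u ∈ 𝒮 := ⟨u, hu, rfl⟩
      by_cases h1 : FirstType n (cls u)
      · exact Or.inl (Or.inl ⟨cls u, ⟨hS, h1⟩, hmem⟩)
      by_cases h2 : SecondType n (cls u)
      · exact Or.inl (Or.inr ⟨cls u, ⟨hS, h1, h2⟩, hmem⟩)
      · exact Or.inr ⟨cls u, ⟨hS, h1, h2⟩, hmem⟩
    · rintro ((⟨W, ⟨⟨u', hu', rfl⟩, -⟩, hW⟩ | ⟨W, ⟨⟨u', hu', rfl⟩, -⟩, hW⟩) |
        ⟨W, ⟨⟨u', hu', rfl⟩, -⟩, hW⟩) <;> exact hclssub u' hW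
  · intro W₁ h₁ W₂ h₂ hne
    have g : ∀ W, W ∈ ({W | W ∈ 𝒮 ∧ FirstType n W} ∪
        {W | W ∈ 𝒮 ∧ ¬ FirstType n W ∧ SecondType n W} ∪
        {W | W ∈ 𝒮 ∧ ¬ FirstType n W ∧ ¬ SecondType n W}) → W ∈ 𝒮 := by
      rintro W ((h | h) | h) <;> exact h.1
    obtain ⟨u, hu, rfl⟩ := g W₁ h₁
    obtain ⟨u', hu', rfl⟩ := g W₂ h₂
    have hR' : ¬ R u u' := fun h => hne (hclseq u hu u' hu' h)
    rw [Set.disjoint_left]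
    intro x hx hx'
    simp only [support, Set.mem_iUnion, Finset.coe_sort_coe, exists_prop] at hx hx'
    obtain ⟨v, hv, hxv⟩ := hx
    obtain ⟨w, hw, hxw⟩ := hx'
    exact Finset.disjoint_left.mp (hclsdisj u hu u' hu' hR' v hv w hw)
      (Finset.mem_coe.mp hxv) (Finset.mem_coe.mp hxw)
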